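/- arXiv:0802.0940 — 6 statements merged into one kernel-verified Lean document; each statement's English description precedes it below -/
import Mathlib

section
/- Let R be a commutative ring, N a natural number, A an N×N diagonal matrix over R with diagonal entries a_1,…,a_N, and B an N×N matrix over R with zero diagonal (B_{ii}=0 for all i). Then det(A+B) = Σ_{K ⊆ {1,…,N}} (Π_{i∈K} a_i) · det(B_{K̂}), where B_{K̂} denotes the matrix obtained from B by deleting the rows and columns whose indices lie in K, and the determinant of the empty (0×0) matrix is 1. -/
open Matrix

lemma piecewise_det_aux {R : Type*} [CommRing R] {N : ℕ}
    (B : Matrix (Fin N) (Fin N) R) (S : Finset (Fin N)) :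
    (Matrix.of (S.piecewise (1 : Matrix (Fin N) (Fin N) R) B)).det =
      (B.submatrix (fun i : {x : Fin N // x ∈ Sᶜ} => (i : Fin N))
        (fun j : {x : Fin N // x ∈ Sᶜ} => (j : Fin N))).det := by
  classical
  set M : Matrix (Fin N) (Fin N) R := Matrix.of (S.piecewise (1 : Matrix (Fin N) (Fin N) R) B)
  let e2 : {x : Fin N // x ∈ Sᶜ} ≃ {x : Fin N // ¬ x ∈ S} :=
    Equiv.subtypeEquivRight fun x => Finset.mem_compl
  let f : {x : Fin N // x ∈ S} ⊕ {x : Fin N // x ∈ Sᶜ} ≃ Fin N :=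
    (Equiv.sumCongr (Equiv.refl _) e2).trans (Equiv.sumCompl (· ∈ S))
  have key : M.submatrix f f =
      Matrix.fromBlocks 1 0
        (B.submatrix (fun i : {x : Fin N // x ∈ Sᶜ} => (i : Fin N)) Subtype.val)
        (B.submatrix (fun i : {x : Fin N // x ∈ Sᶜ} => (i : Fin N))
          (fun j : {x : Fin N // x ∈ Sᶜ} => (j : Fin N))) := by
    ext i j
    cases i with
    | inl i =>
      cases j with
      | inl j =>
        have : M (i : Fin N) (j : Fin N) = (1 : Matrix (Fin N) (Fin N) R) i j := by
          simp [M, Finset.piecewise, i.2]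
        simpa [f, e2, Matrix.one_apply] using this
      | inr j =>
        have hij : (i : Fin N) ≠ (j : Fin N) := by
          intro h
          exact (Finset.mem_compl.mp j.2) (h ▸ i.2)
        have : M (i : Fin N) (j : Fin N) = (1 : Matrix (Fin N) (Fin N) R) i j := by
          simp [M, Finset.piecewise, i.2]
        simpa [f, e2, Matrix.one_apply, hij] using this
    | inr i =>
      have hi : (i : Fin N) ∉ S := Finset.mem_compl.mp i.2
      cases j with
      | inl j =>
        simp [f, e2, M, Finset.piecewise, hi]
      | inr j =>
        simp [f, e2, M, Finset.piecewise, hi]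
  calc M.det = (M.submatrix f f).det := (Matrix.det_submatrix_equiv_self f M).symm
    _ = _ := by rw [key, Matrix.det_fromBlocks_zero₁₂, Matrix.det_one, one_mul]

/-- determinant expansion `det(A+B) = Σ_K (Π_{i∈K} a_i) det(B_{K̂})`
for `A` diagonal and `B` with zero diagonal. -/
theorem stmt0 {R : Type*} [CommRing R] {N : ℕ} (a : Fin N → R)
    (B : Matrix (Fin N) (Fin N) R) (hB : ∀ i, B i i = 0) :
    (Matrix.diagonal a + B).det =
      ∑ K : Finset (Fin N), (∏ i ∈ K, a i) *
        (B.submatrix (fun i : {x : Fin N // x ∈ Kᶜ} => (i : Fin N))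
          (fun j : {x : Fin N // x ∈ Kᶜ} => (j : Fin N))).det := by
  classical
  have h : (Matrix.diagonal a + B).det =
      ∑ S : Finset (Fin N), (Matrix.of (S.piecewise (Matrix.diagonal a) B)).det := by
    exact (Matrix.detRowAlternating.toMultilinearMap.map_add_univ
      (Matrix.diagonal a) B)
  rw [h]
  refine Finset.sum_congr rfl fun S _ => ?_
  set v : Fin N → R := fun i => if i ∈ S then a i else 1 with hv
  have hrow : Matrix.of (S.piecewise (Matrix.diagonal a) B) =
      Matrix.of (fun i j => v i * (Matrix.of (S.piecewise (1 : Matrix (Fin N) (Fin N) R) B)) i j) := by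
    ext i j
    by_cases hi : i ∈ S
    · simp [v, hi, Finset.piecewise, Finset.piecewise_eq_of_mem _ _ _ hi, Matrix.diagonal_apply,
        Matrix.one_apply, ite_mul]
    · simp [v, hi, Finset.piecewise, Finset.piecewise_eq_of_notMem _ _ _ hi]
  rw [hrow, Matrix.det_mul_column, piecewise_det_aux]
  congr 1
  rw [hv]
  simp [Finset.prod_ite_mem, Finset.univ_inter]
end

section
/- Let A be a real N×N diagonal matrix whose diagonal entries are all nonnegative, and let B be a real N×N antisymmetric matrix (Bᵀ = −B). Then det(A+B) ≥ 0. -/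
open Matrix

lemma aux_det_ne_zero {N : ℕ} (a : Fin N → ℝ) (ha : ∀ i, 0 < a i)
    (C : Matrix (Fin N) (Fin N) ℝ) (hC : Cᵀ = -C) :
    (Matrix.diagonal a + C).det ≠ 0 := by
  intro h0
  obtain ⟨v, hv, hmv⟩ := (Matrix.exists_mulVec_eq_zero_iff).mpr h0
  have h1 : v ⬝ᵥ ((Matrix.diagonal a + C) *ᵥ v) = 0 := by
    rw [hmv]; simp
  have h2 : v ⬝ᵥ (C *ᵥ v) = 0 := by
    have e1 : v ⬝ᵥ (C *ᵥ v) = (Cᵀ *ᵥ v) ⬝ᵥ v := by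
      rw [Matrix.dotProduct_mulVec, Matrix.mulVec_transpose]
    rw [hC] at e1
    have e2 : ((-C) *ᵥ v) ⬝ᵥ v = -(v ⬝ᵥ (C *ᵥ v)) := by
      rw [Matrix.neg_mulVec, dotProduct_comm]
      simp
    rw [e2] at e1
    linarith
  have h3 : v ⬝ᵥ (Matrix.diagonal a *ᵥ v) = 0 := by
    rw [Matrix.add_mulVec, dotProduct_add] at h1
    linarith
  have h4 : ∀ i, v i = 0 := by
    have hsum : ∑ i, a i * (v i * v i) = 0 := by
      rw [dotProduct] at h3
      rw [← h3]
      apply Finset.sum_congr rfl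
      intro i _
      rw [Matrix.mulVec_diagonal]
      ring
    intro i
    have hnn : ∀ j ∈ Finset.univ, (0:ℝ) ≤ a j * (v j * v j) :=
      fun j _ => mul_nonneg (ha j).le (mul_self_nonneg _)
    have hz := (Finset.sum_eq_zero_iff_of_nonneg hnn).mp hsum i (Finset.mem_univ i)
    have hai := (ha i).ne'
    have : v i * v i = 0 := by
      rcases mul_eq_zero.mp hz with h | h
      · exact absurd h hai
      · exact h
    exact mul_self_eq_zero.mp this
  exact hv (funext h4)

lemma aux_det_pos {N : ℕ} (a : Fin N → ℝ) (ha : ∀ i, 0 < a i)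
    (B : Matrix (Fin N) (Fin N) ℝ) (hB : Bᵀ = -B) :
    0 < (Matrix.diagonal a + B).det := by
  set g : ℝ → ℝ := fun t => (Matrix.diagonal a + t • B).det with hg
  have hcont : Continuous g := by
    exact (continuous_const.add (continuous_id.smul continuous_const)).matrix_det
  have hg0 : 0 < g 0 := by
    simp only [hg, zero_smul, add_zero, Matrix.det_diagonal]
    exact Finset.prod_pos (fun i _ => ha i)
  have hgne : ∀ t, g t ≠ 0 := by
    intro t
    apply aux_det_ne_zero a ha (t • B)
    rw [Matrix.transpose_smul, hB, smul_neg]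
  have hg1 : g 1 = (Matrix.diagonal a + B).det := by
    simp [hg]
  by_contra hle
  push_neg at hle
  rw [← hg1] at hle
  have hlt : g 1 < 0 := lt_of_le_of_ne hle (hgne 1)
  have hiv := intermediate_value_Icc' (by norm_num : (0:ℝ) ≤ 1) hcont.continuousOn
  have h0mem : (0:ℝ) ∈ Set.Icc (g 1) (g 0) := ⟨hlt.le, hg0.le⟩
  obtain ⟨t, _, ht⟩ := hiv h0mem
  exact hgne t ht

/-- positivity of `det(A+B)` for `A` diagonal with nonnegative entries
and `B` real antisymmetric. -/
theorem stmt1 {N : ℕ} (a : Fin N → ℝ) (ha : ∀ i, 0 ≤ a i)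
    (B : Matrix (Fin N) (Fin N) ℝ) (hB : Bᵀ = -B) :
    0 ≤ (Matrix.diagonal a + B).det := by
  set h : ℝ → ℝ := fun ε => (Matrix.diagonal a + B + ε • (1 : Matrix (Fin N) (Fin N) ℝ)).det with hh
  have hcont : Continuous h := by
    exact (continuous_const.add (continuous_id.smul continuous_const)).matrix_det
  have h0 : h 0 = (Matrix.diagonal a + B).det := by simp [hh]
  have hpos : ∀ ε > 0, 0 < h ε := by
    intro ε hε
    have heq : Matrix.diagonal a + B + ε • (1 : Matrix (Fin N) (Fin N) ℝ)
        = Matrix.diagonal (fun i => a i + ε) + B := by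
      rw [Matrix.smul_one_eq_diagonal]
      ext i j
      rcases eq_or_ne i j with h | h
      · subst h; simp [Matrix.diagonal_apply_eq]; ring
      · simp [Matrix.diagonal_apply_ne _ h]
    rw [hh]
    simp only
    rw [heq]
    exact aux_det_pos _ (fun i => add_pos_of_nonneg_of_pos (ha i) hε) B hB
  have htend : Filter.Tendsto h (nhdsWithin 0 (Set.Ioi 0)) (nhds (h 0)) :=
    (hcont.tendsto 0).mono_left nhdsWithin_le_nhds
  rw [← h0]
  refine ge_of_tendsto htend ?_
  filter_upwards [self_mem_nhdsWithin] with ε hε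
  exact (hpos ε hε).le
end

section
/- For every Schwartz function g : ℝ^D → ℂ, every x ∈ ℝ^D and every index μ ∈ {1,…,D}, the iterated integrals below converge and satisfy: (2π)^{−D} ∫_{ℝ^D} [ ∫_{ℝ^D} (x_μ + ½(Θk)_μ) g(x+y) e^{i⟨k,y⟩} dy ] dk = x_μ g(x) + (i/2) Σ_ν Θ_{μν} ∂_ν g(x), and (2π)^{−D} ∫_{ℝ^D} [ ∫_{ℝ^D} (x+y)_μ g(x + ½Θk) e^{i⟨k,y⟩} dk ] dy = x_μ g(x) − (i/2) Σ_ν Θ_{μν} ∂_ν g(x). These identities express the Moyal products x^μ ⋆ g and g ⋆ x^μ of the coordinate function x^μ with g. -/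
open MeasureTheory Matrix

/-- Integrand of `x^μ ⋆ g` (inner integral over `y`, outer over `k`). -/
noncomputable def moyalCoordLeft {D : ℕ} (Θ : Matrix (Fin D) (Fin D) ℝ)
    (g : SchwartzMap (Fin D → ℝ) ℂ) (x : Fin D → ℝ) (μ : Fin D)
    (k y : Fin D → ℝ) : ℂ :=
  ((x μ + 2⁻¹ * Θ.mulVec k μ : ℝ) : ℂ) * g (x + y) *
    Complex.exp (Complex.I * ((∑ i, k i * y i : ℝ) : ℂ))

/-- Integrand of `g ⋆ x^μ` (inner integral over `k`, outer over `y`). -/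
noncomputable def moyalCoordRight {D : ℕ} (Θ : Matrix (Fin D) (Fin D) ℝ)
    (g : SchwartzMap (Fin D → ℝ) ℂ) (x : Fin D → ℝ) (μ : Fin D)
    (y k : Fin D → ℝ) : ℂ :=
  (((x + y) μ : ℝ) : ℂ) * g (x + (2⁻¹ : ℝ) • Θ.mulVec k) *
    Complex.exp (Complex.I * ((∑ i, k i * y i : ℝ) : ℂ))

open Real SchwartzMap
open scoped FourierTransform RealInnerProductSpace

noncomputable section MoyalHelpers

variable {E F : Type*} [NormedAddCommGroup E] [NormedSpace ℝ E]
  [NormedAddCommGroup F] [NormedSpace ℝ F]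

lemma moyal_affine_temperate (b : F) (A : E ≃L[ℝ] F) :
    Function.HasTemperateGrowth (fun v => b + A v) := by
  apply Function.HasTemperateGrowth.of_fderiv (k := 1)
      (C := ‖b‖ + ‖(A : E →L[ℝ] F)‖)
  · have h : (fderiv ℝ (fun v : E => b + A v)) = fun _ => (A : E →L[ℝ] F) := by
      funext v
      exact (A.hasFDerivAt.const_add b).fderiv
    rw [h]
    exact .const _
  · exact fun v => ((A : E →L[ℝ] F).differentiableAt).const_add b
  · intro v
    have h0 := (A : E →L[ℝ] F).le_opNorm v
    have h1 : ‖b + A v‖ ≤ ‖b‖ + ‖(A : E →L[ℝ] F)‖ * ‖v‖ :=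
      le_trans (norm_add_le _ _) (by gcongr; exact h0)
    nlinarith [norm_nonneg v, norm_nonneg (A : E →L[ℝ] F), norm_nonneg b]

lemma moyal_isometry_add (b : F) : Isometry (fun y : F => b + y) :=
  Isometry.of_dist_eq fun x y => dist_add_left b x y

/-- Composition of a Schwartz function with an invertible affine map. -/
def schComp [FiniteDimensional ℝ E] [FiniteDimensional ℝ F]
    (φ : SchwartzMap F ℂ) (b : F) (A : E ≃L[ℝ] F) : SchwartzMap E ℂ :=
  SchwartzMap.compCLMOfAntilipschitz (𝕜 := ℂ) (moyal_affine_temperate b A)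
    (((moyal_isometry_add b).antilipschitz).comp A.antilipschitz) φ

@[simp] lemma schComp_apply [FiniteDimensional ℝ E] [FiniteDimensional ℝ F]
    (φ : SchwartzMap F ℂ) (b : F) (A : E ≃L[ℝ] F) (v : E) :
    schComp φ b A v = φ (b + A v) := rfl

lemma schComp_zero [FiniteDimensional ℝ E] [FiniteDimensional ℝ F]
    (φ : SchwartzMap F ℂ) (b : F) (A : E ≃L[ℝ] F) :
    schComp φ b A 0 = φ b := by
  rw [schComp_apply, map_zero, add_zero]

lemma fderiv_schComp [FiniteDimensional ℝ E] [FiniteDimensional ℝ F]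
    (φ : SchwartzMap F ℂ) (b : F) (A : E ≃L[ℝ] F) (u : E) :
    fderiv ℝ (⇑(schComp φ b A)) 0 u = fderiv ℝ (⇑φ) b (A u) := by
  have h1 : HasFDerivAt (fun v : E => b + A v) (A : E →L[ℝ] F) 0 :=
    (A.hasFDerivAt.const_add b)
  have h2 : HasFDerivAt (⇑φ) (fderiv ℝ (⇑φ) b) ((fun v : E => b + A v) 0) := by
    simpa using (φ.differentiable (b + A 0)).hasFDerivAt
  have h2' : HasFDerivAt (⇑φ) (fderiv ℝ (⇑φ) b) ((fun v : E => b + A v) 0) := by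
    have hb : (fun v : E => b + A v) 0 = b := by simp
    rw [hb]
    exact (φ.differentiable b).hasFDerivAt
  have h3 := h2'.comp 0 h1
  have hcoe : ⇑(schComp φ b A) = (⇑φ) ∘ (fun v : E => b + A v) := rfl
  rw [hcoe, h3.fderiv]
  rfl

lemma norm_exp_I_mul_ofReal (t : ℝ) : ‖Complex.exp (Complex.I * (t : ℂ))‖ = 1 := by
  rw [Complex.norm_exp]
  simp [Complex.mul_re]

lemma fderiv_expand {D : ℕ} (g : SchwartzMap (Fin D → ℝ) ℂ) (x : Fin D → ℝ)
    (a : Fin D → ℝ) :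
    fderiv ℝ (⇑g) x a = ∑ ν, ((a ν : ℝ) : ℂ) * fderiv ℝ (⇑g) x (Pi.single ν 1) := by
  have h0 : a = ∑ ν, a ν • (Pi.single ν (1 : ℝ) : Fin D → ℝ) := by
    funext j
    simp [Pi.single_apply, Finset.sum_apply]
  conv_lhs => rw [h0]
  rw [map_sum]
  refine Finset.sum_congr rfl fun ν _ => ?_
  rw [(fderiv ℝ (⇑g) x).map_smul]
  exact Complex.real_smul

section Euclid

variable {D : ℕ}

local notation "V" => EuclideanSpace ℝ (Fin D)

lemma moyal_integral_fourier {E : Type*} [NormedAddCommGroup E] [NormedSpace ℂ E]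
    [CompleteSpace E] (ψ : SchwartzMap V E) :
    ∫ w : V, 𝓕 (⇑ψ) w = ψ 0 := by
  have h1 : Integrable (𝓕 (⇑ψ)) := by
    have h := (fourierTransformCLM ℂ ψ).integrable (μ := volume)
    rwa [fourierTransformCLM_apply] at h
  have h2 := ψ.continuous.fourierInv_fourier_eq (ψ.integrable (μ := volume)) h1
  have h3 := congrFun h2 0
  rw [Real.fourierInv_eq] at h3
  simpa using h3

lemma moyal_fourier_of_exp (φ : SchwartzMap V ℂ) (k : V) :
    ∫ v : V, φ v * Complex.exp (Complex.I * ((⟪v, k⟫ : ℝ) : ℂ))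
      = 𝓕 (⇑φ) (-(2 * π)⁻¹ • k) := by
  rw [Real.fourier_eq']
  congr 1
  funext v
  rw [real_inner_smul_right]
  have h : (-2 * π * (-(2 * π)⁻¹ * ⟪v, k⟫)) = ⟪v, k⟫ := by
    field_simp
  rw [h, smul_eq_mul, mul_comm]
  congr 1
  rw [mul_comm]

lemma moyal_fourier_fderiv_apply (φ : SchwartzMap V ℂ) (w u : V) :
    𝓕 (fderiv ℝ (⇑φ)) w u
      = (2 * (π : ℂ) * Complex.I) * ((⟪w, u⟫ : ℝ) : ℂ) * 𝓕 (⇑φ) w := by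
  have hd : (fderiv ℝ (⇑φ)) = ⇑(fderivCLM ℂ _ _ φ) := by
    funext v; exact (fderivCLM_apply ℂ φ v).symm
  have hint : Integrable (fderiv ℝ (⇑φ)) := by
    rw [hd]; exact (fderivCLM ℂ _ _ φ).integrable (μ := volume)
  rw [Real.fourier_fderiv (φ.integrable (μ := volume)) φ.differentiable hint]
  rw [VectorFourier.fourierSMulRight_apply]
  simp only [ContinuousLinearMap.neg_apply, innerSL_apply_apply, neg_smul, smul_eq_mul,
    neg_neg, real_inner_comm]
  rw [Complex.real_smul]
  rw [show ((innerSL ℝ) w) u = ⟪w, u⟫ from rfl]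
  ring

lemma moyal_integral_inner_fourier (φ : SchwartzMap V ℂ) (u : V) :
    Integrable (fun w : V => ((⟪w, u⟫ : ℝ) : ℂ) * 𝓕 (⇑φ) w) ∧
      ∫ w : V, ((⟪w, u⟫ : ℝ) : ℂ) * 𝓕 (⇑φ) w
        = -Complex.I / (2 * (π : ℂ)) * fderiv ℝ (⇑φ) 0 u := by
  have hπ : ((π : ℂ)) ≠ 0 := Complex.ofReal_ne_zero.mpr Real.pi_ne_zero
  have h2πI : (2 * (π : ℂ) * Complex.I) ≠ 0 := by
    simp [hπ, Complex.I_ne_zero]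
  have hd : (fderiv ℝ (⇑φ)) = ⇑(fderivCLM ℂ _ _ φ) := by
    funext v; exact (fderivCLM_apply ℂ φ v).symm
  have hF : Integrable (𝓕 (fderiv ℝ (⇑φ))) := by
    rw [hd]
    have h := (fourierTransformCLM ℂ (fderivCLM ℂ _ _ φ)).integrable (μ := volume)
    rwa [fourierTransformCLM_apply] at h
  have happ : Integrable (fun w : V => 𝓕 (fderiv ℝ (⇑φ)) w u) :=
    hF.apply_continuousLinearMap u
  have hptw : ∀ w : V, ((⟪w, u⟫ : ℝ) : ℂ) * 𝓕 (⇑φ) w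
      = (2 * (π : ℂ) * Complex.I)⁻¹ * (𝓕 (fderiv ℝ (⇑φ)) w u) := by
    intro w
    rw [moyal_fourier_fderiv_apply]
    field_simp
  have hIconst : (2 * (π : ℂ) * Complex.I)⁻¹ = -Complex.I / (2 * (π : ℂ)) := by
    rw [mul_inv, Complex.inv_I]
    ring
  constructor
  · refine (happ.const_mul ((2 * (π : ℂ) * Complex.I)⁻¹)).congr ?_
    exact Filter.Eventually.of_forall fun w => (hptw w).symm
  · have hev : ∫ w : V, ((⟪w, u⟫ : ℝ) : ℂ) * 𝓕 (⇑φ) w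
        = (2 * (π : ℂ) * Complex.I)⁻¹ * ∫ w : V, 𝓕 (fderiv ℝ (⇑φ)) w u := by
      simp_rw [hptw]
      rw [integral_const_mul]
    rw [hev]
    have hfull : ∫ w : V, 𝓕 (fderiv ℝ (⇑φ)) w u = fderiv ℝ (⇑φ) 0 u := by
      rw [← ContinuousLinearMap.integral_apply hF u]
      congr 1
      calc ∫ w : V, 𝓕 (fderiv ℝ (⇑φ)) w
          = ∫ w : V, 𝓕 (⇑(fderivCLM ℂ _ _ φ)) w := by rw [hd]
        _ = (fderivCLM ℂ _ _ φ) 0 := moyal_integral_fourier (fderivCLM ℂ _ _ φ)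
        _ = fderiv ℝ (⇑φ) 0 := fderivCLM_apply ℂ φ 0
    rw [hfull, hIconst]

lemma moyal_key_integrable (ψ : SchwartzMap V ℂ) (c : ℝ) (u : V) :
    Integrable (fun w : V => (((c + ⟪w, u⟫ : ℝ)) : ℂ) * ψ w) := by
  have hmeas : AEStronglyMeasurable
      (fun w : V => (((c + ⟪w, u⟫ : ℝ)) : ℂ) * ψ w) volume := by
    apply Continuous.aestronglyMeasurable
    exact (Complex.continuous_ofReal.comp
      (continuous_const.add (continuous_id.inner continuous_const))).mul ψ.continuous
  refine Integrable.mono'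
      (g := fun w : V => |c| * ‖ψ w‖ + ‖u‖ * (‖w‖ ^ 1 * ‖ψ w‖)) ?_ hmeas ?_
  · exact ((ψ.integrable (μ := volume)).norm.const_mul _).add
      ((ψ.integrable_pow_mul volume 1).const_mul _)
  · refine Filter.Eventually.of_forall fun w => ?_
    rw [norm_mul]
    have h1 : ‖(((c + ⟪w, u⟫ : ℝ)) : ℂ)‖ = |c + ⟪w, u⟫| := by
      rw [Complex.norm_real]; exact Real.norm_eq_abs _
    have h2 : |c + ⟪w, u⟫| ≤ |c| + ‖w‖ * ‖u‖ := by
      refine (abs_add_le _ _).trans ?_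
      gcongr
      exact abs_real_inner_le_norm w u
    rw [h1]
    calc |c + ⟪w, u⟫| * ‖ψ w‖ ≤ (|c| + ‖w‖ * ‖u‖) * ‖ψ w‖ :=
          mul_le_mul_of_nonneg_right h2 (norm_nonneg _)
      _ = |c| * ‖ψ w‖ + ‖u‖ * (‖w‖ ^ 1 * ‖ψ w‖) := by ring

lemma moyal_key_integral (φ : SchwartzMap V ℂ) (c : ℝ) (u : V) :
    ∫ w : V, (((c + ⟪w, u⟫ : ℝ)) : ℂ) * 𝓕 (⇑φ) w
      = (c : ℂ) * φ 0 + -Complex.I / (2 * (π : ℂ)) * fderiv ℝ (⇑φ) 0 u := by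
  have hF : Integrable (𝓕 (⇑φ)) := by
    have h := (fourierTransformCLM ℂ φ).integrable (μ := volume)
    rwa [fourierTransformCLM_apply] at h
  have h1 : Integrable (fun w : V => (c : ℂ) * 𝓕 (⇑φ) w) := hF.const_mul _
  have h2 := (moyal_integral_inner_fourier φ u).1
  have hsplit : (fun w : V => (((c + ⟪w, u⟫ : ℝ)) : ℂ) * 𝓕 (⇑φ) w)
      = fun w : V => (c : ℂ) * 𝓕 (⇑φ) w + ((⟪w, u⟫ : ℝ) : ℂ) * 𝓕 (⇑φ) w := by
    funext w
    push_cast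
    ring
  rw [hsplit, integral_add h1 h2, integral_const_mul, moyal_integral_fourier φ,
    (moyal_integral_inner_fourier φ u).2]

end Euclid

end MoyalHelpers

/-- the iterated integrals defining `x^μ ⋆ g` and `g ⋆ x^μ` converge, and
`x^μ ⋆ g = x_μ g + (i/2) Σ_ν Θ_{μν} ∂_ν g`, `g ⋆ x^μ = x_μ g − (i/2) Σ_ν Θ_{μν} ∂_ν g`. -/
theorem stmt6 (D : ℕ) (hD : 0 < D) (hDe : Even D)
    (Θ : Matrix (Fin D) (Fin D) ℝ) (hΘ : IsUnit Θ) (hΘa : Θᵀ = -Θ)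
    (g : SchwartzMap (Fin D → ℝ) ℂ) (x : Fin D → ℝ) (μ : Fin D) :
    (∀ k, Integrable (fun y => moyalCoordLeft Θ g x μ k y)) ∧
    Integrable (fun k => ∫ y, moyalCoordLeft Θ g x μ k y) ∧
    (((2 * Real.pi) ^ D)⁻¹ : ℝ) • (∫ k, ∫ y, moyalCoordLeft Θ g x μ k y)
      = ((x μ : ℝ) : ℂ) * g x
        + Complex.I / 2 * ∑ ν, ((Θ μ ν : ℝ) : ℂ) * fderiv ℝ (⇑g) x (Pi.single ν 1) ∧
    (∀ y, Integrable (fun k => moyalCoordRight Θ g x μ y k)) ∧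
    Integrable (fun y => ∫ k, moyalCoordRight Θ g x μ y k) ∧
    (((2 * Real.pi) ^ D)⁻¹ : ℝ) • (∫ y, ∫ k, moyalCoordRight Θ g x μ y k)
      = ((x μ : ℝ) : ℂ) * g x
        - Complex.I / 2 * ∑ ν, ((Θ μ ν : ℝ) : ℂ) * fderiv ℝ (⇑g) x (Pi.single ν 1) := by
  classical
  have hπ : (Real.pi : ℂ) ≠ 0 := Complex.ofReal_ne_zero.mpr Real.pi_ne_zero
  have hΘνμ : ∀ ν, Θ ν μ = -Θ μ ν := by
    intro ν
    have h := congrFun (congrFun hΘa μ) ν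
    simpa [Matrix.transpose_apply, Matrix.neg_apply] using h
  -- the invertible matrix `M = Θ/2`
  have hdet : Θ.det ≠ 0 := by
    have h := (Matrix.isUnit_iff_isUnit_det Θ).mp hΘ
    exact h.ne_zero
  set M : Matrix (Fin D) (Fin D) ℝ := (2⁻¹ : ℝ) • Θ with hM
  have hMdet : IsUnit M.det := by
    rw [hM, Matrix.det_smul]
    exact (isUnit_iff_ne_zero).mpr (mul_ne_zero (pow_ne_zero _ (by norm_num)) hdet)
  have hMinv : Invertible M := M.invertibleOfIsUnitDet hMdet
  -- equivalences
  set P : EuclideanSpace ℝ (Fin D) ≃L[ℝ] (Fin D → ℝ) :=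
    PiLp.continuousLinearEquiv 2 ℝ (fun _ : Fin D => ℝ) with hP
  set Mequiv : (Fin D → ℝ) ≃L[ℝ] (Fin D → ℝ) :=
    (M.toLinearEquiv' hMinv).toContinuousLinearEquiv with hMequiv
  have hMequiv_apply : ∀ z : Fin D → ℝ, Mequiv z = (2⁻¹ : ℝ) • Θ.mulVec z := by
    intro z
    rw [hMequiv, LinearEquiv.coe_toContinuousLinearEquiv']
    show M.mulVec z = _
    rw [hM, Matrix.smul_mulVec]
  set A₂ : EuclideanSpace ℝ (Fin D) ≃L[ℝ] (Fin D → ℝ) := P.trans Mequiv with hA₂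
  -- Schwartz functions
  set G : SchwartzMap (EuclideanSpace ℝ (Fin D)) ℂ := schComp g x P with hG
  set H : SchwartzMap (EuclideanSpace ℝ (Fin D)) ℂ := schComp g x A₂ with hHdef
  set Gpi : SchwartzMap (Fin D → ℝ) ℂ :=
    schComp g x (ContinuousLinearEquiv.refl ℝ (Fin D → ℝ)) with hGpi
  set Hpi : SchwartzMap (Fin D → ℝ) ℂ := schComp g x Mequiv with hHpi
  -- measure-preserving equivalence
  set mE := (MeasurableEquiv.toLp 2 (Fin D → ℝ)).symm with hmE
  have hmp : MeasurePreserving mE := EuclideanSpace.volume_preserving_symm_measurableEquiv_toLp (Fin D)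
  -- useful vectors
  set uL : EuclideanSpace ℝ (Fin D) := P.symm (fun ν => -Real.pi * Θ μ ν) with huL
  set uL' : EuclideanSpace ℝ (Fin D) := P.symm (fun ν => 2⁻¹ * Θ μ ν) with huL'
  set u₂ : EuclideanSpace ℝ (Fin D) := P.symm (Pi.single μ (-(2 * Real.pi))) with hu₂
  set e₂ : EuclideanSpace ℝ (Fin D) := P.symm (Pi.single μ 1) with he₂
  -- scaling equivalence
  have hσne : (-(2 * Real.pi)⁻¹ : ℝ) ≠ 0 := by
    simp [Real.pi_ne_zero]
  set σ : EuclideanSpace ℝ (Fin D) ≃L[ℝ] EuclideanSpace ℝ (Fin D) :=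
    (LinearEquiv.smulOfNeZero ℝ (EuclideanSpace ℝ (Fin D)) (-(2 * Real.pi)⁻¹)
      hσne).toContinuousLinearEquiv with hσ
  have hσ_apply : ∀ v : EuclideanSpace ℝ (Fin D), σ v = (-(2 * Real.pi)⁻¹ : ℝ) • v := by
    intro v
    rw [hσ]
    simp
  have hmEv : ∀ (v : EuclideanSpace ℝ (Fin D)) (i : Fin D), mE v i = v i := fun _ _ => rfl
  have hPs : ∀ (z : Fin D → ℝ) (i : Fin D), P.symm z i = z i := fun _ _ => rfl
  have hPa : ∀ (v : EuclideanSpace ℝ (Fin D)) (i : Fin D), P v i = v i := fun _ _ => rfl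
  ----------------------------------------------------------------
  -- (1) inner integrability (left)
  have hinner_left : ∀ k, Integrable (fun y => moyalCoordLeft Θ g x μ k y) := by
    intro k
    have hfun : (fun y => moyalCoordLeft Θ g x μ k y)
        = fun y => Complex.exp (Complex.I * ((∑ i, k i * y i : ℝ) : ℂ)) *
            (((x μ + 2⁻¹ * Θ.mulVec k μ : ℝ) : ℂ) * Gpi y) := by
      funext y
      simp only [moyalCoordLeft, hGpi, schComp_apply, ContinuousLinearEquiv.coe_refl',
        id_eq]
      ring_nf
    rw [hfun]
    refine Integrable.bdd_mul ((Gpi.integrable (μ := volume)).const_mul _) ?_ (c := 1) (Filter.Eventually.of_forall fun y => ?_)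
    · refine (Complex.continuous_exp.comp ?_).aestronglyMeasurable
      refine continuous_const.mul (Complex.continuous_ofReal.comp ?_)
      exact continuous_finset_sum _ fun i _ => continuous_const.mul (continuous_apply i)
    · exact le_of_eq (norm_exp_I_mul_ofReal _)
  ----------------------------------------------------------------
  -- inner value (left)
  have hval_left : ∀ k : Fin D → ℝ,
      ∫ y, moyalCoordLeft Θ g x μ k y
        = ((x μ + 2⁻¹ * Θ.mulVec k μ : ℝ) : ℂ) *
            𝓕 (⇑G) (-(2 * Real.pi)⁻¹ • P.symm k) := by
    intro k
    rw [← hmp.integral_comp mE.measurableEmbedding (fun y => moyalCoordLeft Θ g x μ k y)]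
    have hptw : ∀ v : EuclideanSpace ℝ (Fin D), moyalCoordLeft Θ g x μ k (mE v)
        = ((x μ + 2⁻¹ * Θ.mulVec k μ : ℝ) : ℂ) *
            (G v * Complex.exp (Complex.I * ((⟪v, P.symm k⟫ : ℝ) : ℂ))) := by
      intro v
      simp only [moyalCoordLeft]
      have h1 : g (x + mE v) = G v := rfl
      have h2 : (∑ i, k i * mE v i : ℝ) = ⟪v, P.symm k⟫ := by
        simp only [PiLp.inner_apply, RCLike.inner_apply, conj_trivial, hPs, hmEv]
      rw [h1, h2, mul_assoc]
    simp_rw [hptw]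
    rw [integral_const_mul]
    congr 1
    exact moyal_fourier_of_exp G (P.symm k)
  ----------------------------------------------------------------
  -- (2) outer integrability (left)
  have houter_left : Integrable (fun k => ∫ y, moyalCoordLeft Θ g x μ k y) := by
    have hfun : (fun k => ∫ y, moyalCoordLeft Θ g x μ k y)
        = fun k => ((x μ + 2⁻¹ * Θ.mulVec k μ : ℝ) : ℂ) *
            𝓕 (⇑G) (-(2 * Real.pi)⁻¹ • P.symm k) := funext hval_left
    rw [hfun, ← hmp.integrable_comp_emb mE.measurableEmbedding]
    set S : SchwartzMap (EuclideanSpace ℝ (Fin D)) ℂ :=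
      SchwartzMap.compCLMOfContinuousLinearEquiv ℂ σ (fourierTransformCLM ℂ G) with hS
    have hS_apply : ∀ v : EuclideanSpace ℝ (Fin D),
        S v = 𝓕 (⇑G) ((-(2 * Real.pi)⁻¹ : ℝ) • v) := by
      intro v
      rw [hS]
      simp only [SchwartzMap.compCLMOfContinuousLinearEquiv_apply, Function.comp_apply,
        fourierTransformCLM_apply, hσ_apply]
      rfl
    have heq : ((fun k => ((x μ + 2⁻¹ * Θ.mulVec k μ : ℝ) : ℂ) *
          𝓕 (⇑G) (-(2 * Real.pi)⁻¹ • P.symm k)) ∘ ⇑mE)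
        = fun v : EuclideanSpace ℝ (Fin D) =>
            (((x μ + ⟪v, uL'⟫ : ℝ)) : ℂ) * S v := by
      funext v
      simp only [Function.comp_apply]
      rw [hS_apply]
      congr 3
      simp only [huL', PiLp.inner_apply, RCLike.inner_apply, conj_trivial, hPs, hmEv,
        Matrix.mulVec, dotProduct, Finset.mul_sum]
      exact Finset.sum_congr rfl fun i _ => by ring
    rw [heq]
    exact moyal_key_integrable S (x μ) uL'
  ----------------------------------------------------------------
  -- (3) value (left)
  have hval3 : (((2 * Real.pi) ^ D)⁻¹ : ℝ) • (∫ k, ∫ y, moyalCoordLeft Θ g x μ k y)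
      = ((x μ : ℝ) : ℂ) * g x
        + Complex.I / 2 * ∑ ν, ((Θ μ ν : ℝ) : ℂ) * fderiv ℝ (⇑g) x (Pi.single ν 1) := by
    simp only [hval_left]
    set fL : EuclideanSpace ℝ (Fin D) → ℂ :=
      fun v => ((x μ + 2⁻¹ * Θ.mulVec (P v) μ : ℝ) : ℂ) *
        𝓕 (⇑G) (-(2 * Real.pi)⁻¹ • v) with hfL
    have step1 : ∫ k, ((x μ + 2⁻¹ * Θ.mulVec k μ : ℝ) : ℂ) *
          𝓕 (⇑G) (-(2 * Real.pi)⁻¹ • P.symm k)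
        = ∫ v : EuclideanSpace ℝ (Fin D), fL v :=
      (hmp.integral_comp mE.measurableEmbedding _).symm
    rw [step1]
    have step2 : ∫ v : EuclideanSpace ℝ (Fin D), fL v
        = ((2 * Real.pi) ^ D : ℝ) •
            ∫ w : EuclideanSpace ℝ (Fin D), fL ((-(2 * Real.pi)) • w) := by
      have h := MeasureTheory.Measure.integral_comp_smul
        (volume : Measure (EuclideanSpace ℝ (Fin D))) fL (-(2 * Real.pi))
      rw [h, finrank_euclideanSpace_fin]
      rw [smul_smul]
      have habs : |((-(2 * Real.pi)) ^ D)⁻¹| = ((2 * Real.pi) ^ D)⁻¹ := by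
        rw [abs_inv, abs_pow, abs_neg, abs_of_pos Real.two_pi_pos]
      rw [habs, mul_inv_cancel₀ (pow_ne_zero _ Real.two_pi_pos.ne'), one_smul]
    rw [step2, smul_smul, inv_mul_cancel₀ (pow_ne_zero _ Real.two_pi_pos.ne'), one_smul]
    have step3 : (fun w : EuclideanSpace ℝ (Fin D) => fL ((-(2 * Real.pi)) • w))
        = fun w : EuclideanSpace ℝ (Fin D) =>
            (((x μ + ⟪w, uL⟫ : ℝ)) : ℂ) * 𝓕 (⇑G) w := by
      funext w
      simp only [hfL]
      have h1 : -(2 * Real.pi)⁻¹ • ((-(2 * Real.pi)) • w) = w := by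
        rw [smul_smul]
        have : (-(2 * Real.pi)⁻¹) * (-(2 * Real.pi)) = 1 := by
          field_simp
        rw [this, one_smul]
      rw [h1]
      congr 3
      rw [_root_.map_smul, Matrix.mulVec_smul]
      simp only [huL, PiLp.inner_apply, RCLike.inner_apply, conj_trivial, hPs, hmEv, hPa,
        Matrix.mulVec, dotProduct, Pi.smul_apply, smul_eq_mul, Finset.mul_sum]
      exact Finset.sum_congr rfl fun i _ => by ring
    rw [step3, moyal_key_integral G (x μ) uL]
    have hG0 : G 0 = g x := schComp_zero g x P
    have hGd : fderiv ℝ (⇑G) 0 uL = fderiv ℝ (⇑g) x (P uL) := fderiv_schComp g x P uL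
    rw [hG0, hGd, fderiv_expand g x (P uL)]
    congr 1
    rw [Finset.mul_sum, Finset.mul_sum]
    refine Finset.sum_congr rfl fun ν _ => ?_
    have hPuL : (P uL) ν = -Real.pi * Θ μ ν := by
      simp [huL]
    rw [hPuL]
    push_cast
    field_simp
  ----------------------------------------------------------------
  -- (4) inner integrability (right)
  have hinner_right : ∀ y, Integrable (fun k => moyalCoordRight Θ g x μ y k) := by
    intro y
    have hfun : (fun k => moyalCoordRight Θ g x μ y k)
        = fun k => Complex.exp (Complex.I * ((∑ i, k i * y i : ℝ) : ℂ)) *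
            ((((x + y) μ : ℝ) : ℂ) * Hpi k) := by
      funext k
      simp only [moyalCoordRight, hHpi, schComp_apply]
      rw [hMequiv_apply]
      ring
    rw [hfun]
    refine Integrable.bdd_mul ((Hpi.integrable (μ := volume)).const_mul _) ?_ (c := 1) (Filter.Eventually.of_forall fun k => ?_)
    · refine (Complex.continuous_exp.comp ?_).aestronglyMeasurable
      refine continuous_const.mul (Complex.continuous_ofReal.comp ?_)
      exact continuous_finset_sum _ fun i _ => (continuous_apply i).mul continuous_const
    · exact le_of_eq (norm_exp_I_mul_ofReal _)
  ----------------------------------------------------------------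
  -- inner value (right)
  have hval_right : ∀ y : Fin D → ℝ,
      ∫ k, moyalCoordRight Θ g x μ y k
        = (((x + y) μ : ℝ) : ℂ) * 𝓕 (⇑H) (-(2 * Real.pi)⁻¹ • P.symm y) := by
    intro y
    rw [← hmp.integral_comp mE.measurableEmbedding (fun k => moyalCoordRight Θ g x μ y k)]
    have hptw : ∀ v : EuclideanSpace ℝ (Fin D), moyalCoordRight Θ g x μ y (mE v)
        = (((x + y) μ : ℝ) : ℂ) *
            (H v * Complex.exp (Complex.I * ((⟪v, P.symm y⟫ : ℝ) : ℂ))) := by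
      intro v
      simp only [moyalCoordRight]
      have h1 : g (x + (2⁻¹ : ℝ) • Θ.mulVec (mE v)) = H v := by
        rw [hHdef, schComp_apply, hA₂]
        have h2 : (P.trans Mequiv) v = Mequiv (P v) := rfl
        rw [h2, hMequiv_apply]
        rfl
      have h3 : (∑ i, mE v i * y i : ℝ) = ⟪v, P.symm y⟫ := by
        simp only [PiLp.inner_apply, RCLike.inner_apply, conj_trivial, hPs, hmEv]
        exact Finset.sum_congr rfl fun i _ => mul_comm _ _
      rw [h1, h3, mul_assoc]
    simp_rw [hptw]
    rw [integral_const_mul]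
    congr 1
    exact moyal_fourier_of_exp H (P.symm y)
  ----------------------------------------------------------------
  -- (5) outer integrability (right)
  have houter_right : Integrable (fun y => ∫ k, moyalCoordRight Θ g x μ y k) := by
    have hfun : (fun y => ∫ k, moyalCoordRight Θ g x μ y k)
        = fun y => (((x + y) μ : ℝ) : ℂ) *
            𝓕 (⇑H) (-(2 * Real.pi)⁻¹ • P.symm y) := funext hval_right
    rw [hfun, ← hmp.integrable_comp_emb mE.measurableEmbedding]
    set S₂ : SchwartzMap (EuclideanSpace ℝ (Fin D)) ℂ :=
      SchwartzMap.compCLMOfContinuousLinearEquiv ℂ σ (fourierTransformCLM ℂ H) with hS₂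
    have hS₂_apply : ∀ v : EuclideanSpace ℝ (Fin D),
        S₂ v = 𝓕 (⇑H) ((-(2 * Real.pi)⁻¹ : ℝ) • v) := by
      intro v
      rw [hS₂]
      simp only [SchwartzMap.compCLMOfContinuousLinearEquiv_apply, Function.comp_apply,
        fourierTransformCLM_apply, hσ_apply]
      rfl
    have heq : ((fun y => (((x + y) μ : ℝ) : ℂ) *
          𝓕 (⇑H) (-(2 * Real.pi)⁻¹ • P.symm y)) ∘ ⇑mE)
        = fun v : EuclideanSpace ℝ (Fin D) =>
            (((x μ + ⟪v, e₂⟫ : ℝ)) : ℂ) * S₂ v := by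
      funext v
      simp only [Function.comp_apply]
      rw [hS₂_apply]
      congr 3
      simp only [he₂, PiLp.inner_apply, RCLike.inner_apply, conj_trivial, hPs, hmEv,
        Pi.add_apply, Pi.single_apply, mul_ite, mul_one, mul_zero,
        Finset.sum_ite_eq', Finset.sum_ite_eq, Finset.mem_univ, if_true]
      simp only [ite_mul, one_mul, zero_mul, Finset.sum_ite_eq', Finset.sum_ite_eq, Finset.mem_univ, if_true]
    rw [heq]
    exact moyal_key_integrable S₂ (x μ) e₂
  ----------------------------------------------------------------
  -- (6) value (right)
  have hval6 : (((2 * Real.pi) ^ D)⁻¹ : ℝ) • (∫ y, ∫ k, moyalCoordRight Θ g x μ y k)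
      = ((x μ : ℝ) : ℂ) * g x
        - Complex.I / 2 * ∑ ν, ((Θ μ ν : ℝ) : ℂ) * fderiv ℝ (⇑g) x (Pi.single ν 1) := by
    simp only [hval_right]
    set fR : EuclideanSpace ℝ (Fin D) → ℂ :=
      fun v => (((x + P v) μ : ℝ) : ℂ) * 𝓕 (⇑H) (-(2 * Real.pi)⁻¹ • v) with hfR
    have step1 : ∫ y, (((x + y) μ : ℝ) : ℂ) * 𝓕 (⇑H) (-(2 * Real.pi)⁻¹ • P.symm y)
        = ∫ v : EuclideanSpace ℝ (Fin D), fR v :=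
      (hmp.integral_comp mE.measurableEmbedding _).symm
    rw [step1]
    have step2 : ∫ v : EuclideanSpace ℝ (Fin D), fR v
        = ((2 * Real.pi) ^ D : ℝ) •
            ∫ w : EuclideanSpace ℝ (Fin D), fR ((-(2 * Real.pi)) • w) := by
      have h := MeasureTheory.Measure.integral_comp_smul
        (volume : Measure (EuclideanSpace ℝ (Fin D))) fR (-(2 * Real.pi))
      rw [h, finrank_euclideanSpace_fin]
      rw [smul_smul]
      have habs : |((-(2 * Real.pi)) ^ D)⁻¹| = ((2 * Real.pi) ^ D)⁻¹ := by
        rw [abs_inv, abs_pow, abs_neg, abs_of_pos Real.two_pi_pos]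
      rw [habs, mul_inv_cancel₀ (pow_ne_zero _ Real.two_pi_pos.ne'), one_smul]
    rw [step2, smul_smul, inv_mul_cancel₀ (pow_ne_zero _ Real.two_pi_pos.ne'), one_smul]
    have step3 : (fun w : EuclideanSpace ℝ (Fin D) => fR ((-(2 * Real.pi)) • w))
        = fun w : EuclideanSpace ℝ (Fin D) =>
            (((x μ + ⟪w, u₂⟫ : ℝ)) : ℂ) * 𝓕 (⇑H) w := by
      funext w
      simp only [hfR]
      have h1 : -(2 * Real.pi)⁻¹ • ((-(2 * Real.pi)) • w) = w := by
        rw [smul_smul]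
        have : (-(2 * Real.pi)⁻¹) * (-(2 * Real.pi)) = 1 := by field_simp
        rw [this, one_smul]
      rw [h1]
      congr 3
      rw [_root_.map_smul]
      simp only [hu₂, PiLp.inner_apply, RCLike.inner_apply, conj_trivial, hPs, hmEv, hPa,
        Pi.add_apply, Pi.smul_apply, smul_eq_mul, Pi.single_apply, mul_ite, mul_one,
        mul_zero, Finset.sum_ite_eq', Finset.sum_ite_eq, Finset.mem_univ, if_true]
      simp only [ite_mul, zero_mul, Finset.sum_ite_eq', Finset.sum_ite_eq, Finset.mem_univ, if_true]
    rw [step3, moyal_key_integral H (x μ) u₂]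
    have hH0 : H 0 = g x := schComp_zero g x A₂
    have hHd : fderiv ℝ (⇑H) 0 u₂ = fderiv ℝ (⇑g) x (A₂ u₂) := fderiv_schComp g x A₂ u₂
    rw [hH0, hHd, fderiv_expand g x (A₂ u₂)]
    rw [sub_eq_add_neg]
    congr 1
    rw [Finset.mul_sum, Finset.mul_sum, ← Finset.sum_neg_distrib]
    refine Finset.sum_congr rfl fun ν _ => ?_
    have hA₂u₂ : (A₂ u₂) ν = Real.pi * Θ μ ν := by
      have h1 : A₂ u₂ = Mequiv (P u₂) := rfl
      have h2 : P u₂ = Pi.single μ (-(2 * Real.pi)) := by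
        rw [hu₂]
        exact P.apply_symm_apply _
      rw [h1, h2, hMequiv_apply]
      have h3 : Θ.mulVec (Pi.single μ (-(2 * Real.pi))) ν
          = Θ ν μ * (-(2 * Real.pi)) := by
        exact dotProduct_single _ _ _
      simp only [Pi.smul_apply, smul_eq_mul, h3, hΘνμ ν]
      ring
    rw [hA₂u₂]
    push_cast
    field_simp
  exact ⟨hinner_left, houter_left, hval3, hinner_right, houter_right, hval6⟩
end

section
/- Let x, y, z be real numbers with x > 0, y ≥ 0, z ≥ 0 and x + y + z < 1. Then for all real u, v, w: Q(u,v,w) ≥ 0, where Q(u,v,w) = [1/x + 1/(x+z) + 1/(1−x−z) + 1/(1−x−y−z)] u² + [1/(1−x−y−z) − 1/(2(1−y)) − 1/(2(1−y−z))] v² + [1/(x+z) + 1/(1−x−z) + 1/(1−x−y−z) − 1/(2(1−z)) − 1/(2(1−y−z))] w² + (2/(1−x−y−z)) uv + [2/(x+z) + 2/(1−x−z) + 2/(1−x−y−z)] uw + [2/(1−x−y−z) − 1/(1−y−z)] vw. -/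
/-- Engel form of Cauchy–Schwarz for two terms. -/
lemma cs_two (p q a b : ℝ) (hp : 0 < p) (hq : 0 < q) :
    (a + b) ^ 2 / (p + q) ≤ a ^ 2 / p + b ^ 2 / q := by
  rw [div_add_div _ _ hp.ne' hq.ne', div_le_div_iff₀ (by positivity) (by positivity)]
  nlinarith [sq_nonneg (a * q - b * p), mul_pos hp hq]

/-- positive semidefiniteness of the quadratic form `Q` (the negative
Hessian form of the exponent function `g`) on the open simplex
`x > 0, y ≥ 0, z ≥ 0, x + y + z < 1`. -/
theorem stmt14 (x y z : ℝ) (hx : 0 < x) (hy : 0 ≤ y) (hz : 0 ≤ z)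
    (hs : x + y + z < 1) (u v w : ℝ) :
    0 ≤ (1 / x + 1 / (x + z) + 1 / (1 - x - z) + 1 / (1 - x - y - z)) * u ^ 2
      + (1 / (1 - x - y - z) - 1 / (2 * (1 - y)) - 1 / (2 * (1 - y - z))) * v ^ 2
      + (1 / (x + z) + 1 / (1 - x - z) + 1 / (1 - x - y - z)
          - 1 / (2 * (1 - z)) - 1 / (2 * (1 - y - z))) * w ^ 2
      + (2 / (1 - x - y - z)) * u * v
      + (2 / (x + z) + 2 / (1 - x - z) + 2 / (1 - x - y - z)) * u * w
      + (2 / (1 - x - y - z) - 1 / (1 - y - z)) * v * w := by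
  have h1 : 0 < x + z := by linarith
  have h2 : 0 < 1 - x - z := by linarith
  have h3 : 0 < 1 - x - y - z := by linarith
  have h4 : 0 < 1 - y := by linarith
  have h5 : 0 < 1 - z := by linarith
  have h6 : 0 < 1 - y - z := by linarith
  have hQ : (1 / x + 1 / (x + z) + 1 / (1 - x - z) + 1 / (1 - x - y - z)) * u ^ 2
      + (1 / (1 - x - y - z) - 1 / (2 * (1 - y)) - 1 / (2 * (1 - y - z))) * v ^ 2
      + (1 / (x + z) + 1 / (1 - x - z) + 1 / (1 - x - y - z)
          - 1 / (2 * (1 - z)) - 1 / (2 * (1 - y - z))) * w ^ 2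
      + (2 / (1 - x - y - z)) * u * v
      + (2 / (x + z) + 2 / (1 - x - z) + 2 / (1 - x - y - z)) * u * w
      + (2 / (1 - x - y - z) - 1 / (1 - y - z)) * v * w
      = u ^ 2 / x + (u + w) ^ 2 / (x + z) + (u + w) ^ 2 / (1 - x - z)
        + (u + v + w) ^ 2 / (1 - x - y - z)
        - (1 / 2) * (v ^ 2 / (1 - y)) - (1 / 2) * (w ^ 2 / (1 - z))
        - (1 / 2) * ((v + w) ^ 2 / (1 - y - z)) := by
    rw [show (1:ℝ) / (2 * (1 - y)) = (1 / 2) * (1 / (1 - y)) by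
        rw [one_div, one_div, mul_inv]; ring,
      show (1:ℝ) / (2 * (1 - z)) = (1 / 2) * (1 / (1 - z)) by
        rw [one_div, one_div, mul_inv]; ring,
      show (1:ℝ) / (2 * (1 - y - z)) = (1 / 2) * (1 / (1 - y - z)) by
        rw [one_div, one_div, mul_inv]; ring]
    ring
  rw [hQ]
  have c1 : (v + w) ^ 2 / (1 - y - z)
      ≤ (u + v + w) ^ 2 / (1 - x - y - z) + u ^ 2 / x := by
    have := cs_two (1 - x - y - z) x (u + v + w) (-u) h3 hx
    rw [show (1 - x - y - z) + x = 1 - y - z by ring,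
      show (u + v + w) + (-u) = v + w by ring] at this
    rw [neg_sq] at this; exact this
  have c2 : v ^ 2 / (1 - y)
      ≤ (u + v + w) ^ 2 / (1 - x - y - z) + (u + w) ^ 2 / (x + z) := by
    have := cs_two (1 - x - y - z) (x + z) (u + v + w) (-(u + w)) h3 h1
    rw [show (1 - x - y - z) + (x + z) = 1 - y by ring,
      show (u + v + w) + (-(u + w)) = v by ring] at this
    rw [neg_sq] at this; exact this
  have c3 : w ^ 2 / (1 - z)
      ≤ u ^ 2 / x + (u + w) ^ 2 / (1 - x - z) := by
    have := cs_two x (1 - x - z) (-u) (u + w) hx h2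
    rw [show x + (1 - x - z) = 1 - z by ring,
      show (-u) + (u + w) = w by ring] at this
    rw [neg_sq] at this; exact this
  have n1 : 0 ≤ (u + w) ^ 2 / (x + z) := by positivity
  have n2 : 0 ≤ (u + w) ^ 2 / (1 - x - z) := by positivity
  linarith
end

section
/- Let C > 0 and define, for natural numbers m, h, p with u ≤ m, A(m, m+p, h, u) = √(m!(m+h)!(m+p)!(m+p+h)!)/((m−u)!(m+p−u)!(h+u)!u!) and, for α ∈ (0,1), Γ^α(m,h,p) = (√(1−α)/(1+Cα))^{2m+p} (1+Cα)^{−h} Σ_{u=0}^{m} ( α√(C(1+C))/√(1−α) )^{2m+p−2u} A(m, m+p, h, u). Then there exist constants K > 0 and c > 0, depending only on C, such that for all α ∈ (0,1) satisfying √(C(C+1)) ≤ ½√(1−α) and all m, h, p ∈ ℕ with α(m+h+p) ≤ 1, one has Γ^α(m,h,p) ≤ K e^{−c(α(m+h+p) + p)}. -/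
/-- The combinatorial coefficient
`A(m,l,h,u) = √(m!(m+h)!l!(l+h)!)/((m−u)!(l−u)!(h+u)!u!)`. -/
noncomputable def Acoef (m l h u : ℕ) : ℝ :=
  Real.sqrt ((m.factorial * (m + h).factorial * l.factorial * (l + h).factorial : ℕ)) /
    (((m - u).factorial * (l - u).factorial * (h + u).factorial * u.factorial : ℕ) : ℝ)

/-- The matrix-basis kernel
`Γ^α(m,h,p) = (√(1−α)/(1+Cα))^{2m+p} (1+Cα)^{−h}
  Σ_{u=0}^{m} (α√(C(1+C))/√(1−α))^{2m+p−2u} A(m, m+p, h, u)`. -/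
noncomputable def GammaSlice (C α : ℝ) (m h p : ℕ) : ℝ :=
  (Real.sqrt (1 - α) / (1 + C * α)) ^ (2 * m + p) * ((1 + C * α) ^ h)⁻¹ *
    ∑ u ∈ Finset.range (m + 1),
      (α * Real.sqrt (C * (1 + C)) / Real.sqrt (1 - α)) ^ (2 * m + p - 2 * u) *
        Acoef m (m + p) h u

lemma Acoef_nonneg (m l h u : ℕ) : 0 ≤ Acoef m l h u :=
  div_nonneg (Real.sqrt_nonneg _) (Nat.cast_nonneg _)


lemma factN (m h p u : ℕ) (hu : u ≤ m) :
    m.factorial * (m + h).factorial * (m + p).factorial * (m + p + h).factorial ≤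
      ((m + h + p) ^ (2 * m + p - 2 * u) * ((h + u).factorial * u.factorial)) ^ 2 := by
  set k := m + h + p with hk
  have h1 : m.factorial ≤ u.factorial * k ^ (m - u) := by
    calc m.factorial = (m - (m - u)).factorial * m.descFactorial (m - u) :=
          (Nat.factorial_mul_descFactorial (Nat.sub_le m u)).symm
      _ = u.factorial * m.descFactorial (m - u) := by rw [show m - (m - u) = u by omega]
      _ ≤ u.factorial * k ^ (m - u) := by
          exact Nat.mul_le_mul_left _ ((Nat.descFactorial_le_pow m _).trans
            (Nat.pow_le_pow_left (by omega) _))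
  have h2 : (m + h).factorial ≤ (h + u).factorial * k ^ (m - u) := by
    calc (m + h).factorial
        = ((m + h) - (m - u)).factorial * (m + h).descFactorial (m - u) :=
          (Nat.factorial_mul_descFactorial (by omega)).symm
      _ = (h + u).factorial * (m + h).descFactorial (m - u) := by
          rw [show (m + h) - (m - u) = h + u by omega]
      _ ≤ (h + u).factorial * k ^ (m - u) := by
          exact Nat.mul_le_mul_left _ ((Nat.descFactorial_le_pow _ _).trans
            (Nat.pow_le_pow_left (by omega) _))
  have h3 : (m + p).factorial ≤ u.factorial * k ^ (m + p - u) := by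
    calc (m + p).factorial
        = ((m + p) - (m + p - u)).factorial * (m + p).descFactorial (m + p - u) :=
          (Nat.factorial_mul_descFactorial (by omega)).symm
      _ = u.factorial * (m + p).descFactorial (m + p - u) := by
          rw [show (m + p) - (m + p - u) = u by omega]
      _ ≤ u.factorial * k ^ (m + p - u) := by
          exact Nat.mul_le_mul_left _ ((Nat.descFactorial_le_pow _ _).trans
            (Nat.pow_le_pow_left (by omega) _))
  have h4 : (m + p + h).factorial ≤ (h + u).factorial * k ^ (m + p - u) := by
    calc (m + p + h).factorial
        = ((m + p + h) - (m + p - u)).factorial * (m + p + h).descFactorial (m + p - u) :=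
          (Nat.factorial_mul_descFactorial (by omega)).symm
      _ = (h + u).factorial * (m + p + h).descFactorial (m + p - u) := by
          rw [show (m + p + h) - (m + p - u) = h + u by omega]
      _ ≤ (h + u).factorial * k ^ (m + p - u) := by
          exact Nat.mul_le_mul_left _ ((Nat.descFactorial_le_pow _ _).trans
            (Nat.pow_le_pow_left (by omega) _))
  calc m.factorial * (m + h).factorial * (m + p).factorial * (m + p + h).factorial
      ≤ (u.factorial * k ^ (m - u)) * ((h + u).factorial * k ^ (m - u)) *
        (u.factorial * k ^ (m + p - u)) * ((h + u).factorial * k ^ (m + p - u)) := by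
        exact Nat.mul_le_mul (Nat.mul_le_mul (Nat.mul_le_mul h1 h2) h3) h4
    _ = (k ^ ((m - u) + (m + p - u)) * ((h + u).factorial * u.factorial)) ^ 2 := by
        rw [pow_add]; ring
    _ = (k ^ (2 * m + p - 2 * u) * ((h + u).factorial * u.factorial)) ^ 2 := by
        rw [show (m - u) + (m + p - u) = 2 * m + p - 2 * u by omega]

lemma Acoef_le (m h p u : ℕ) (hu : u ≤ m) :
    Acoef m (m + p) h u ≤ ((m + h + p : ℕ) : ℝ) ^ (2 * m + p - 2 * u) := by
  have hN := factN m h p u hu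
  rw [Acoef]
  have hD : (0:ℝ) <
      (((m - u).factorial * (m + p - u).factorial * (h + u).factorial * u.factorial : ℕ) : ℝ) := by
    exact_mod_cast Nat.pos_of_ne_zero (by positivity)
  rw [div_le_iff₀ hD]
  have hcast : ((m.factorial * (m + h).factorial * (m + p).factorial * (m + p + h).factorial : ℕ) : ℝ)
      ≤ ((((m + h + p) ^ (2 * m + p - 2 * u) * ((h + u).factorial * u.factorial) : ℕ)) : ℝ) ^ 2 := by
    exact_mod_cast hN
  calc Real.sqrt ((m.factorial * (m + h).factorial * (m + p).factorial * (m + p + h).factorial : ℕ))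
      ≤ Real.sqrt (((((m + h + p) ^ (2 * m + p - 2 * u) * ((h + u).factorial * u.factorial) : ℕ)) : ℝ) ^ 2) :=
        Real.sqrt_le_sqrt hcast
    _ = (((m + h + p) ^ (2 * m + p - 2 * u) * ((h + u).factorial * u.factorial) : ℕ) : ℝ) :=
        Real.sqrt_sq (by positivity)
    _ ≤ ((m + h + p : ℕ) : ℝ) ^ (2 * m + p - 2 * u) *
        (((m - u).factorial * (m + p - u).factorial * (h + u).factorial * u.factorial : ℕ) : ℝ) := by
        push_cast
        have h1 : (1:ℝ) ≤ ((m - u).factorial : ℝ) := by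
          exact_mod_cast (m - u).factorial_pos
        have h2 : (1:ℝ) ≤ ((m + p - u).factorial : ℝ) := by
          exact_mod_cast (m + p - u).factorial_pos
        have hAB : (1:ℝ) ≤ ((m - u).factorial : ℝ) * ((m + p - u).factorial : ℝ) := by
          nlinarith
        calc ((m:ℝ) + h + p) ^ (2 * m + p - 2 * u) * (((h + u).factorial : ℝ) * (u.factorial : ℝ))
            = 1 * (((m:ℝ) + h + p) ^ (2 * m + p - 2 * u) *
                (((h + u).factorial : ℝ) * (u.factorial : ℝ))) := by ring
          _ ≤ (((m - u).factorial : ℝ) * ((m + p - u).factorial : ℝ)) *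
              (((m:ℝ) + h + p) ^ (2 * m + p - 2 * u) *
                (((h + u).factorial : ℝ) * (u.factorial : ℝ))) := by
              apply mul_le_mul_of_nonneg_right hAB
              positivity
          _ = ((m:ℝ) + h + p) ^ (2 * m + p - 2 * u) *
              (((m - u).factorial : ℝ) * ((m + p - u).factorial : ℝ) *
                ((h + u).factorial : ℝ) * (u.factorial : ℝ)) := by ring

/-- there are constants `K, c > 0` depending only on `C` such that for all
`α ∈ (0,1)` with `√(C(C+1)) ≤ ½√(1−α)` and all `m, h, p` with `α(m+h+p) ≤ 1`,
`Γ^α(m,h,p) ≤ K e^{−c(α(m+h+p) + p)}`. -/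
theorem stmt16 (C : ℝ) (hC : 0 < C) :
    ∃ K > (0 : ℝ), ∃ c > (0 : ℝ), ∀ α : ℝ, 0 < α → α < 1 →
      Real.sqrt (C * (C + 1)) ≤ 2⁻¹ * Real.sqrt (1 - α) →
      ∀ m h p : ℕ, α * ((m : ℝ) + (h : ℝ) + (p : ℝ)) ≤ 1 →
        GammaSlice C α m h p ≤
          K * Real.exp (-(c * (α * ((m : ℝ) + (h : ℝ) + (p : ℝ)) + (p : ℝ)))) := by
  refine ⟨2, by norm_num, min (C / (C + 1)) 2⁻¹, ?_, ?_⟩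
  · have : 0 < C / (C + 1) := by positivity
    exact lt_min this (by norm_num)
  intro α hα hα1 hsd m h p hk
  set c : ℝ := min (C / (C + 1)) 2⁻¹ with hc
  have hc2 : c ≤ 2⁻¹ := min_le_right _ _
  have hc1 : c ≤ C / (C + 1) := min_le_left _ _
  have h1α : (0:ℝ) < 1 - α := by linarith
  have hsq1α : 0 < Real.sqrt (1 - α) := Real.sqrt_pos.mpr h1α
  have hden : (1:ℝ) ≤ 1 + C * α := by nlinarith
  -- β ≤ α / 2
  set β : ℝ := α * Real.sqrt (C * (1 + C)) / Real.sqrt (1 - α) with hβ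
  have hβ0 : 0 ≤ β := by positivity
  have hβle : β ≤ α / 2 := by
    rw [hβ, div_le_iff₀ hsq1α]
    have : Real.sqrt (C * (1 + C)) ≤ 2⁻¹ * Real.sqrt (1 - α) := by
      rw [show C * (1 + C) = C * (C + 1) by ring]; exact hsd
    calc α * Real.sqrt (C * (1 + C)) ≤ α * (2⁻¹ * Real.sqrt (1 - α)) := by
          exact mul_le_mul_of_nonneg_left this hα.le
      _ = α / 2 * Real.sqrt (1 - α) := by ring
  -- β * k ≤ 1/2
  have hβk : β * ((m + h + p : ℕ) : ℝ) ≤ 2⁻¹ := by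
    have hknn : (0:ℝ) ≤ ((m + h + p : ℕ) : ℝ) := Nat.cast_nonneg _
    calc β * ((m + h + p : ℕ) : ℝ) ≤ (α / 2) * ((m + h + p : ℕ) : ℝ) :=
          mul_le_mul_of_nonneg_right hβle hknn
      _ = 2⁻¹ * (α * ((m:ℝ) + h + p)) := by push_cast; ring
      _ ≤ 2⁻¹ := by nlinarith
  -- term bound
  have hterm : ∀ u ∈ Finset.range (m + 1),
      β ^ (2 * m + p - 2 * u) * Acoef m (m + p) h u ≤
        (4⁻¹ : ℝ) ^ (m - u) * (2⁻¹ : ℝ) ^ p := by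
    intro u hu
    have hum : u ≤ m := Nat.lt_succ_iff.mp (Finset.mem_range.mp hu)
    have e1 : β ^ (2 * m + p - 2 * u) * Acoef m (m + p) h u ≤
        (β * ((m + h + p : ℕ) : ℝ)) ^ (2 * m + p - 2 * u) := by
      rw [mul_pow]
      exact mul_le_mul_of_nonneg_left (Acoef_le m h p u hum) (by positivity)
    have e2 : (β * ((m + h + p : ℕ) : ℝ)) ^ (2 * m + p - 2 * u) ≤
        (2⁻¹ : ℝ) ^ (2 * m + p - 2 * u) :=
      pow_le_pow_left₀ (by positivity) hβk _
    have e3 : ((2:ℝ)⁻¹) ^ (2 * m + p - 2 * u) = (4⁻¹ : ℝ) ^ (m - u) * (2⁻¹ : ℝ) ^ p := by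
      rw [show 2 * m + p - 2 * u = 2 * (m - u) + p by omega, pow_add, pow_mul]
      norm_num
    calc β ^ (2 * m + p - 2 * u) * Acoef m (m + p) h u
        ≤ (β * ((m + h + p : ℕ) : ℝ)) ^ (2 * m + p - 2 * u) := e1
      _ ≤ ((2:ℝ)⁻¹) ^ (2 * m + p - 2 * u) := e2
      _ = (4⁻¹ : ℝ) ^ (m - u) * (2⁻¹ : ℝ) ^ p := e3
  -- sum bound
  have hsum : (∑ u ∈ Finset.range (m + 1),
      β ^ (2 * m + p - 2 * u) * Acoef m (m + p) h u) ≤ 2 * (2⁻¹ : ℝ) ^ p := by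
    calc (∑ u ∈ Finset.range (m + 1), β ^ (2 * m + p - 2 * u) * Acoef m (m + p) h u)
        ≤ ∑ u ∈ Finset.range (m + 1), (4⁻¹ : ℝ) ^ (m - u) * (2⁻¹ : ℝ) ^ p :=
          Finset.sum_le_sum hterm
      _ = (∑ u ∈ Finset.range (m + 1), (4⁻¹ : ℝ) ^ (m - u)) * (2⁻¹ : ℝ) ^ p := by
          rw [Finset.sum_mul]
      _ = (∑ u ∈ Finset.range (m + 1), (4⁻¹ : ℝ) ^ u) * (2⁻¹ : ℝ) ^ p := by
          congr 1
          have := Finset.sum_range_reflect (fun j => (4⁻¹ : ℝ) ^ j) (m + 1)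
          rw [← this]
          apply Finset.sum_congr rfl
          intro j hj
          have : j ≤ m := Nat.lt_succ_iff.mp (Finset.mem_range.mp hj)
          rw [show m + 1 - 1 - j = m - j by omega]
      _ ≤ 2 * (2⁻¹ : ℝ) ^ p := by
          apply mul_le_mul_of_nonneg_right _ (by positivity)
          calc (∑ u ∈ Finset.range (m + 1), (4⁻¹ : ℝ) ^ u)
              ≤ (4⁻¹:ℝ) ^ 0 / (1 - 4⁻¹) := by
                rw [Finset.range_eq_Ico]
                exact geom_sum_Ico_le_of_lt_one (by norm_num) (by norm_num)
            _ ≤ 2 := by norm_num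
  -- prefactor bounds
  have hP1 : (Real.sqrt (1 - α) / (1 + C * α)) ^ (2 * m + p) ≤
      Real.exp (-(α / 2)) ^ (2 * m + p) := by
    apply pow_le_pow_left₀ (by positivity)
    have hb : Real.sqrt (1 - α) / (1 + C * α) ≤ Real.sqrt (1 - α) :=
      div_le_self hsq1α.le hden
    refine hb.trans ?_
    have h1 : 1 - α ≤ Real.exp (-α) := by
      have := Real.add_one_le_exp (-α); linarith
    calc Real.sqrt (1 - α) ≤ Real.sqrt (Real.exp (-α)) := Real.sqrt_le_sqrt h1
      _ = Real.exp (-(α / 2)) := by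
          rw [show Real.exp (-α) = Real.exp (-(α / 2)) ^ 2 by
            rw [sq, ← Real.exp_add]; ring_nf]
          exact Real.sqrt_sq (Real.exp_nonneg _)
  have hkey : Real.exp (C / (C + 1) * α) ≤ 1 + C * α := by
    have h0 : (0:ℝ) < 1 + C * α := by linarith
    set s : ℝ := C * α / (1 + C * α) with hs
    have hle : C / (C + 1) * α ≤ s := by
      rw [hs, div_mul_eq_mul_div, div_le_div_iff₀ (by positivity) h0]
      nlinarith [mul_nonneg (mul_nonneg (mul_nonneg hC.le hC.le) hα.le) h1α.le]
    have h3 : 1 - s ≤ Real.exp (-s) := by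
      have := Real.add_one_le_exp (-s); linarith
    have h4 : (1 - s) = (1 + C * α)⁻¹ := by
      rw [hs]; field_simp; ring
    have h7 : 1 ≤ (1 + C * α) * Real.exp (-s) := by
      have := mul_le_mul_of_nonneg_left h3 h0.le
      rw [h4] at this
      calc (1:ℝ) = (1 + C * α) * (1 + C * α)⁻¹ := by field_simp
        _ ≤ (1 + C * α) * Real.exp (-s) := this
    calc Real.exp (C / (C + 1) * α) ≤ Real.exp s := Real.exp_le_exp.mpr hle
      _ = Real.exp s * 1 := by ring
      _ ≤ Real.exp s * ((1 + C * α) * Real.exp (-s)) :=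
          mul_le_mul_of_nonneg_left h7 (Real.exp_nonneg _)
      _ = (1 + C * α) * (Real.exp s * Real.exp (-s)) := by ring
      _ = 1 + C * α := by rw [← Real.exp_add]; simp
  have hP2 : ((1 + C * α) ^ h)⁻¹ ≤ Real.exp (-(C / (C + 1) * α)) ^ h := by
    rw [← inv_pow]
    apply pow_le_pow_left₀ (by positivity)
    calc (1 + C * α)⁻¹ ≤ (Real.exp (C / (C + 1) * α))⁻¹ :=
        inv_anti₀ (Real.exp_pos _) hkey
      _ = Real.exp (-(C / (C + 1) * α)) := by rw [← Real.exp_neg]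
  -- assemble
  have hsum_nonneg : (0:ℝ) ≤ ∑ u ∈ Finset.range (m + 1),
      β ^ (2 * m + p - 2 * u) * Acoef m (m + p) h u := by
    apply Finset.sum_nonneg
    intro u _
    exact mul_nonneg (by positivity) (Acoef_nonneg _ _ _ _)
  have hmain : GammaSlice C α m h p ≤
      Real.exp (-(α / 2)) ^ (2 * m + p) * Real.exp (-(C / (C + 1) * α)) ^ h *
        (2 * (2⁻¹ : ℝ) ^ p) := by
    rw [GammaSlice]
    apply mul_le_mul
    · apply mul_le_mul hP1 hP2 (by positivity) (by positivity)
    · exact hsum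
    · exact hsum_nonneg
    · positivity
  refine hmain.trans ?_
  have e3 : (2⁻¹ : ℝ) ^ p = Real.exp ((p : ℝ) * Real.log 2⁻¹) := by
    rw [Real.exp_nat_mul, Real.exp_log (by norm_num)]
  have hlog2 : (2⁻¹:ℝ) ≤ Real.log 2 := by
    have := Real.log_two_gt_d9; norm_num at this ⊢; linarith
  have hcpos : (0:ℝ) < C / (C + 1) := by positivity
  have t1 : c * (α * (m:ℝ)) ≤ 2⁻¹ * (α * (m:ℝ)) :=
    mul_le_mul_of_nonneg_right hc2 (by positivity)
  have t2 : c * (α * (p:ℝ)) ≤ 2⁻¹ * (α * (p:ℝ)) :=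
    mul_le_mul_of_nonneg_right hc2 (by positivity)
  have t3 : c * (α * (h:ℝ)) ≤ C / (C + 1) * (α * (h:ℝ)) :=
    mul_le_mul_of_nonneg_right hc1 (by positivity)
  have t4 : c * (p:ℝ) ≤ Real.log 2 * (p:ℝ) :=
    mul_le_mul_of_nonneg_right (hc2.trans hlog2) (Nat.cast_nonneg p)
  calc Real.exp (-(α / 2)) ^ (2 * m + p) * Real.exp (-(C / (C + 1) * α)) ^ h * (2 * (2⁻¹:ℝ) ^ p)
      = 2 * (Real.exp (((2 * m + p : ℕ) : ℝ) * -(α / 2)) *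
          Real.exp ((h : ℝ) * -(C / (C + 1) * α)) * Real.exp ((p : ℝ) * Real.log 2⁻¹)) := by
        rw [← Real.exp_nat_mul, ← Real.exp_nat_mul, e3]; ring
    _ = 2 * Real.exp (((2 * m + p : ℕ) : ℝ) * -(α / 2) + (h : ℝ) * -(C / (C + 1) * α) +
          (p : ℝ) * Real.log 2⁻¹) := by
        rw [← Real.exp_add, ← Real.exp_add]
    _ ≤ 2 * Real.exp (-(c * (α * ((m : ℝ) + (h : ℝ) + (p : ℝ)) + (p : ℝ)))) := by
        apply mul_le_mul_of_nonneg_left _ (by norm_num)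
        apply Real.exp_le_exp.mpr
        rw [Real.log_inv]
        push_cast
        have hαm : (0:ℝ) ≤ α * (m:ℝ) := mul_nonneg hα.le (Nat.cast_nonneg m)
        linarith [t1, t2, t3, t4, hαm]
end

section
/- For every x ∈ ℝ^D and all Schwartz functions f, g : ℝ^D → ℂ, the two integral representations of the Moyal product agree: (2π)^{−D} ∫_{ℝ^D} ∫_{ℝ^D} f(x + ½Θk) g(x+y) e^{i⟨k,y⟩} dy dk = (1/(π^D |det Θ|)) ∫_{ℝ^D} ∫_{ℝ^D} f(x+y) g(x+z) e^{−2i⟨y, Θ^{−1}z⟩} dz dy, and both double integrals converge absolutely. -/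
open MeasureTheory Matrix

section MoyalAux

variable {D : ℕ}

private lemma auxMapEq (T : (Fin D → ℝ) ≃ₗ[ℝ] (Fin D → ℝ)) :
    Measure.map T volume
      = ENNReal.ofReal |(LinearMap.det (T : (Fin D → ℝ) →ₗ[ℝ] (Fin D → ℝ)))⁻¹| • volume :=
  Measure.map_linearMap_addHaar_eq_smul_addHaar volume T.isUnit_det'.ne_zero

private lemma auxIntegral (T : (Fin D → ℝ) ≃ₗ[ℝ] (Fin D → ℝ)) (φ : (Fin D → ℝ) → ℂ) :
    ∫ k, φ k = |LinearMap.det (T : (Fin D → ℝ) →ₗ[ℝ] (Fin D → ℝ))| • ∫ y, φ (T y) := by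
  set d := LinearMap.det (T : (Fin D → ℝ) →ₗ[ℝ] (Fin D → ℝ)) with hd
  have hdne : d ≠ 0 := T.isUnit_det'.ne_zero
  let e : (Fin D → ℝ) ≃ᵐ (Fin D → ℝ) :=
    T.toContinuousLinearEquiv.toHomeomorph.toMeasurableEquiv
  have h1 : ∫ y, φ (T y) = ∫ k, φ k ∂(Measure.map e volume) := by
    rw [integral_map_equiv]; rfl
  rw [show ⇑e = ⇑T from rfl, auxMapEq T, integral_smul_measure,
    ENNReal.toReal_ofReal (abs_nonneg _)] at h1
  rw [h1, smul_smul, ← hd, abs_inv, mul_inv_cancel₀ (by simpa using hdne), one_smul]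

private lemma auxIntegrable (T : (Fin D → ℝ) ≃ₗ[ℝ] (Fin D → ℝ)) {φ : (Fin D → ℝ) → ℂ}
    (h : Integrable φ) : Integrable (fun y => φ (T y)) := by
  let e : (Fin D → ℝ) ≃ᵐ (Fin D → ℝ) :=
    T.toContinuousLinearEquiv.toHomeomorph.toMeasurableEquiv
  have h2 : Integrable φ (Measure.map e volume) := by
    rw [show ⇑e = ⇑T from rfl, auxMapEq T]
    refine (integrable_smul_measure ?_ ENNReal.ofReal_ne_top).2 h
    simp [ENNReal.ofReal_eq_zero, abs_pos, T.isUnit_det'.ne_zero]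
  exact (integrable_map_equiv e φ).1 h2

private lemma auxProdInt {F G : (Fin D → ℝ) → ℂ} (hF : Integrable F) (hG : Integrable G)
    (hFc : Continuous F) (hGc : Continuous G)
    (e : ((Fin D → ℝ) × (Fin D → ℝ)) → ℂ) (hec : Continuous e) (he1 : ∀ p, ‖e p‖ = 1) :
    Integrable (fun p : (Fin D → ℝ) × (Fin D → ℝ) => F p.1 * G p.2 * e p) := by
  have hbi : Integrable (fun p : (Fin D → ℝ) × (Fin D → ℝ) => ‖F p.1‖ * ‖G p.2‖) := by
    rw [Measure.volume_eq_prod]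
    exact hF.norm.mul_prod hG.norm
  refine hbi.mono' ?_ ?_
  · exact (((hFc.comp continuous_fst).mul (hGc.comp continuous_snd)).mul hec).aestronglyMeasurable
  · filter_upwards with p
    simp [norm_mul, he1 p, abs_norm]

end MoyalAux

/-- the two integral representations of the Moyal product agree:
`(2π)^{−D} ∫∫ f(x+½Θk) g(x+y) e^{i⟨k,y⟩} dy dk
  = (1/(π^D|det Θ|)) ∫∫ f(x+y) g(x+z) e^{−2i⟨y,Θ^{−1}z⟩} dz dy`,
and both double integrals converge absolutely. -/
theorem stmt18 (D : ℕ) (hD : 0 < D) (hDe : Even D)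
    (Θ : Matrix (Fin D) (Fin D) ℝ) (hΘ : IsUnit Θ) (hΘa : Θᵀ = -Θ)
    (f g : SchwartzMap (Fin D → ℝ) ℂ) (x : Fin D → ℝ) :
    Integrable (fun p : (Fin D → ℝ) × (Fin D → ℝ) =>
      f (x + (2⁻¹ : ℝ) • Θ.mulVec p.1) * g (x + p.2) *
        Complex.exp (Complex.I * ((∑ i, p.1 i * p.2 i : ℝ) : ℂ))) ∧
    Integrable (fun p : (Fin D → ℝ) × (Fin D → ℝ) =>
      f (x + p.1) * g (x + p.2) *
        Complex.exp (-(2 * Complex.I * ((∑ i, p.1 i * (Θ⁻¹.mulVec p.2) i : ℝ) : ℂ)))) ∧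
    (((2 * Real.pi) ^ D)⁻¹ : ℝ) •
        (∫ k : Fin D → ℝ, ∫ y : Fin D → ℝ,
          f (x + (2⁻¹ : ℝ) • Θ.mulVec k) * g (x + y) *
            Complex.exp (Complex.I * ((∑ i, k i * y i : ℝ) : ℂ)))
      = ((Real.pi ^ D * |Θ.det|)⁻¹ : ℝ) •
          (∫ y : Fin D → ℝ, ∫ z : Fin D → ℝ,
            f (x + y) * g (x + z) *
              Complex.exp (-(2 * Complex.I * ((∑ i, y i * (Θ⁻¹.mulVec z) i : ℝ) : ℂ)))) := by
  have hdet : IsUnit Θ.det := (Matrix.isUnit_iff_isUnit_det Θ).mp hΘ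
  have hdetne : Θ.det ≠ 0 := hdet.ne_zero
  have hinvT : (Θ⁻¹)ᵀ = -Θ⁻¹ := by
    rw [Matrix.transpose_nonsing_inv, hΘa]
    exact Matrix.inv_eq_right_inv (by rw [neg_mul_neg, Matrix.mul_nonsing_inv Θ hdet])
  -- continuity of the linear maps
  have hmΘ : Continuous fun k : Fin D → ℝ => Θ.mulVec k :=
    (Matrix.mulVecLin Θ).continuous_of_finiteDimensional
  have hmΘi : Continuous fun k : Fin D → ℝ => Θ⁻¹.mulVec k :=
    (Matrix.mulVecLin Θ⁻¹).continuous_of_finiteDimensional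
  -- integrability of translates/compositions
  have hg0 : Integrable (fun v : Fin D → ℝ => g (x + v)) := g.integrable.comp_add_left x
  have hf0 : Integrable (fun v : Fin D → ℝ => f (x + v)) := f.integrable.comp_add_left x
  -- the matrix ½Θ
  have hHdet : ((2⁻¹ : ℝ) • Θ).det ≠ 0 := by
    rw [Matrix.det_smul]; positivity
  have iH : Invertible ((2⁻¹ : ℝ) • Θ) :=
    ((2⁻¹ : ℝ) • Θ).invertibleOfIsUnitDet (Ne.isUnit hHdet)
  have hf1 : Integrable (fun k : Fin D → ℝ => f (x + (2⁻¹ : ℝ) • Θ.mulVec k)) := by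
    have := auxIntegrable (((2⁻¹ : ℝ) • Θ).toLinearEquiv' iH) hf0
    refine this.congr ?_
    filter_upwards with k
    congr 1
    rw [show (((2⁻¹ : ℝ) • Θ).toLinearEquiv' iH) k = ((2⁻¹ : ℝ) • Θ).mulVec k from rfl,
      Matrix.smul_mulVec]
  have hf1c : Continuous fun k : Fin D → ℝ => (f (x + (2⁻¹ : ℝ) • Θ.mulVec k) : ℂ) :=
    f.continuous.comp (continuous_const.add (hmΘ.const_smul (2⁻¹ : ℝ)))
  have hgc : Continuous fun v : Fin D → ℝ => (g (x + v) : ℂ) :=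
    g.continuous.comp (continuous_const.add continuous_id)
  have hfc : Continuous fun v : Fin D → ℝ => (f (x + v) : ℂ) :=
    f.continuous.comp (continuous_const.add continuous_id)
  have hnorm1 : ∀ r : ℝ, ‖Complex.exp (Complex.I * (r : ℂ))‖ = 1 := by
    intro r
    rw [Complex.norm_exp]
    simp
  have hnorm2 : ∀ r : ℝ, ‖Complex.exp (-(2 * Complex.I * (r : ℂ)))‖ = 1 := by
    intro r
    rw [Complex.norm_exp]
    simp
  have hsum1 : Continuous fun p : (Fin D → ℝ) × (Fin D → ℝ) => (∑ i, p.1 i * p.2 i : ℝ) := by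
    fun_prop
  have hsum2 : Continuous fun p : (Fin D → ℝ) × (Fin D → ℝ) =>
      (∑ i, p.1 i * (Θ⁻¹.mulVec p.2) i : ℝ) := by
    have : Continuous fun p : (Fin D → ℝ) × (Fin D → ℝ) => Θ⁻¹.mulVec p.2 :=
      hmΘi.comp continuous_snd
    exact continuous_finset_sum _ fun i _ =>
      ((continuous_apply i).comp continuous_fst).mul ((continuous_apply i).comp this)
  refine ⟨?_, ?_, ?_⟩
  · exact auxProdInt hf1 hg0 hf1c hgc _
      (Complex.continuous_exp.comp (continuous_const.mul (Complex.continuous_ofReal.comp hsum1)))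
      (fun p => hnorm1 _)
  · exact auxProdInt hf0 hg0 hfc hgc _
      (Complex.continuous_exp.comp ((continuous_const.mul
        (Complex.continuous_ofReal.comp hsum2)).neg))
      (fun p => hnorm2 _)
  -- the change of variables
  · have hAdet : ((2 : ℝ) • Θ⁻¹).det = 2 ^ D * Θ.det⁻¹ := by
      rw [Matrix.det_smul, Matrix.det_nonsing_inv, Ring.inverse_eq_inv']
      simp
    have hAne : ((2 : ℝ) • Θ⁻¹).det ≠ 0 := by
      rw [hAdet]; positivity
    have iA : Invertible ((2 : ℝ) • Θ⁻¹) :=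
      ((2 : ℝ) • Θ⁻¹).invertibleOfIsUnitDet (Ne.isUnit hAne)
    set T := ((2 : ℝ) • Θ⁻¹).toLinearEquiv' iA with hT
    have hTdet : LinearMap.det (T : (Fin D → ℝ) →ₗ[ℝ] (Fin D → ℝ)) = ((2 : ℝ) • Θ⁻¹).det := by
      rw [show (T : (Fin D → ℝ) →ₗ[ℝ] (Fin D → ℝ)) = Matrix.toLin' ((2 : ℝ) • Θ⁻¹) from rfl]
      exact LinearMap.det_toLin' _
    have key := auxIntegral T (fun k => ∫ y : Fin D → ℝ,
      f (x + (2⁻¹ : ℝ) • Θ.mulVec k) * g (x + y) *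
        Complex.exp (Complex.I * ((∑ i, k i * y i : ℝ) : ℂ)))
    -- pointwise identification of the inner integrals
    have hpt : ∀ y : Fin D → ℝ,
        (∫ z : Fin D → ℝ,
          f (x + (2⁻¹ : ℝ) • Θ.mulVec (T y)) * g (x + z) *
            Complex.exp (Complex.I * ((∑ i, (T y) i * z i : ℝ) : ℂ)))
        = ∫ z : Fin D → ℝ, f (x + y) * g (x + z) *
            Complex.exp (-(2 * Complex.I * ((∑ i, y i * (Θ⁻¹.mulVec z) i : ℝ) : ℂ))) := by
      intro y
      have hTy : (T y) = ((2 : ℝ) • Θ⁻¹).mulVec y := rfl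
      have harg : (2⁻¹ : ℝ) • Θ.mulVec (T y) = y := by
        rw [hTy, Matrix.mulVec_mulVec, Matrix.mul_smul, Matrix.mul_nonsing_inv Θ hdet,
          Matrix.smul_mulVec, Matrix.one_mulVec, smul_smul]
        norm_num
      have hdot : ∀ z : Fin D → ℝ,
          (∑ i, (T y) i * z i : ℝ) = -(2 * ∑ i, y i * (Θ⁻¹.mulVec z) i) := by
        intro z
        have hAT : ((2 : ℝ) • Θ⁻¹)ᵀ = (-2 : ℝ) • Θ⁻¹ := by
          rw [Matrix.transpose_smul, hinvT, smul_neg, ← neg_smul]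
        calc (∑ i, (T y) i * z i : ℝ)
            = (((2 : ℝ) • Θ⁻¹) *ᵥ y) ⬝ᵥ z := by rw [hTy]; rfl
          _ = z ⬝ᵥ (((2 : ℝ) • Θ⁻¹) *ᵥ y) := dotProduct_comm _ _
          _ = (z ᵥ* ((2 : ℝ) • Θ⁻¹)) ⬝ᵥ y := Matrix.dotProduct_mulVec _ _ _
          _ = ((((2 : ℝ) • Θ⁻¹)ᵀ) *ᵥ z) ⬝ᵥ y := by rw [Matrix.mulVec_transpose]
          _ = ((-2 : ℝ) • (Θ⁻¹ *ᵥ z)) ⬝ᵥ y := by rw [hAT, Matrix.smul_mulVec]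
          _ = (-2 : ℝ) * ((Θ⁻¹ *ᵥ z) ⬝ᵥ y) := smul_dotProduct _ _ _
          _ = -(2 * ∑ i, y i * (Θ⁻¹.mulVec z) i) := by
              rw [dotProduct_comm]
              simp only [dotProduct]
              ring
      have : (fun z : Fin D → ℝ =>
          f (x + (2⁻¹ : ℝ) • Θ.mulVec (T y)) * g (x + z) *
            Complex.exp (Complex.I * ((∑ i, (T y) i * z i : ℝ) : ℂ)))
          = fun z : Fin D → ℝ => f (x + y) * g (x + z) *
            Complex.exp (-(2 * Complex.I * ((∑ i, y i * (Θ⁻¹.mulVec z) i : ℝ) : ℂ))) := by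
        funext z
        rw [harg, hdot z]
        congr 1
        push_cast
        ring
      rw [this]
    have hscal : (((2 * Real.pi) ^ D)⁻¹ : ℝ) * |((2 : ℝ) • Θ⁻¹).det|
        = (Real.pi ^ D * |Θ.det|)⁻¹ := by
      rw [hAdet, abs_mul, abs_pow, abs_inv, abs_two, mul_pow]
      have hπ : Real.pi ≠ 0 := Real.pi_ne_zero
      have habs : |Θ.det| ≠ 0 := abs_ne_zero.2 hdetne
      field_simp
    rw [hTdet] at key
    rw [key, smul_smul, hscal, show (fun y : Fin D → ℝ => ∫ z : Fin D → ℝ,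
      f (x + (2⁻¹ : ℝ) • Θ.mulVec (T y)) * g (x + z) *
        Complex.exp (Complex.I * ((∑ i, (T y) i * z i : ℝ) : ℂ)))
      = fun y : Fin D → ℝ => ∫ z : Fin D → ℝ, f (x + y) * g (x + z) *
        Complex.exp (-(2 * Complex.I * ((∑ i, y i * (Θ⁻¹.mulVec z) i : ℝ) : ℂ)))
      from funext hpt]
end
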